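/- Let R be a commutative ring, let m ≤ n be positive integers, let u be a unit of R, and let c_{m+1}, …, c_n be units of R. Then substituting X_i ↦ u·X_i^{-1} for 1 ≤ i ≤ m and X_i ↦ c_i for m+1 ≤ i ≤ n maps every symmetric Laurent polynomial in n variables over R to a symmetric Laurent polynomial in m variables over R, the resulting map R[X_1^{±1},…,X_n^{±1}]^{S_n} → R[X_1^{±1},…,X_m^{±1}]^{S_m} is an R-algebra homomorphism, and this homomorphism is surjective. -/

import Mathlib

open Finset

/-- The additive map on exponents underlying the substitution
`X_i ↦ u·X_i⁻¹ (i < m)`, `X_i ↦ c_i (m ≤ i)`: it sends an exponent vector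
`v : Fin n → ℤ` to the exponent vector `i ↦ -v i` on the first `m` variables. -/
def laurentExpHom (n m : ℕ) (h : m ≤ n) : (Fin n → ℤ) →+ (Fin m → ℤ) where
  toFun v := fun i => -v (Fin.castLE h i)
  map_zero' := by funext i; simp
  map_add' v w := by funext i; exact neg_add _ _

/-- The unit-valued character underlying the substitution: the monomial `X^v` picks up
the scalar `u^(Σ_{i<m} v i) · Π_{m ≤ i} c_i^(v i)`. -/
def laurentCharHom {R : Type*} [CommRing R] (n m : ℕ) (h : m ≤ n) (u : Rˣ)
    (c : Fin n → Rˣ) : Multiplicative (Fin n → ℤ) →* Rˣ :=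
  MonoidHom.mk' (fun v => u ^ (∑ i : Fin m, Multiplicative.toAdd v (Fin.castLE h i)) *
    ∏ i : Fin n, (if m ≤ (i : ℕ) then c i ^ (Multiplicative.toAdd v i) else 1)) <| by
    intro v w
    have h1 : ∀ i : Fin n,
        (if m ≤ (i : ℕ) then c i ^ (Multiplicative.toAdd (v * w) i) else 1) =
          (if m ≤ (i : ℕ) then c i ^ (Multiplicative.toAdd v i) else 1) *
            (if m ≤ (i : ℕ) then c i ^ (Multiplicative.toAdd w i) else 1) := by
      intro i
      by_cases hi : m ≤ (i : ℕ) <;> simp [hi, toAdd_mul, zpow_add]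
    have h2 : (∑ i : Fin m, Multiplicative.toAdd (v * w) (Fin.castLE h i)) =
        (∑ i : Fin m, Multiplicative.toAdd v (Fin.castLE h i)) +
          (∑ i : Fin m, Multiplicative.toAdd w (Fin.castLE h i)) := by
      rw [← Finset.sum_add_distrib]
      simp [toAdd_mul]
    rw [h2, zpow_add, Finset.prod_congr rfl (fun i _ => h1 i), Finset.prod_mul_distrib]
    exact mul_mul_mul_comm _ _ _ _


/-- The substitution `X_i ↦ u·X_i⁻¹ (1 ≤ i ≤ m)`, `X_i ↦ c_i (m < i ≤ n)`, on the level
of monomials. -/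
noncomputable def laurentMonHom {R : Type*} [CommRing R] (n m : ℕ) (h : m ≤ n) (u : Rˣ)
    (c : Fin n → Rˣ) : Multiplicative (Fin n → ℤ) →* AddMonoidAlgebra R (Fin m → ℤ) where
  toFun v := AddMonoidAlgebra.single (laurentExpHom n m h (Multiplicative.toAdd v))
      ((laurentCharHom n m h u c v : Rˣ) : R)
  map_one' := by
    simp [AddMonoidAlgebra.one_def]
  map_mul' v w := by
    rw [AddMonoidAlgebra.single_mul_single, ← Units.val_mul, ← map_mul, ← map_add]
    rfl

/-- The substitution `X_i ↦ u·X_i⁻¹ (1 ≤ i ≤ m)`, `X_i ↦ c_i (m < i ≤ n)`, as an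
`R`-algebra homomorphism between Laurent polynomial rings
`R[X_1^{±1},…,X_n^{±1}] → R[X_1^{±1},…,X_m^{±1}]` (realized as group algebras of `ℤ^n`
resp. `ℤ^m`). -/
noncomputable def laurentSubst {R : Type*} [CommRing R] (n m : ℕ) (h : m ≤ n) (u : Rˣ)
    (c : Fin n → Rˣ) :
    AddMonoidAlgebra R (Fin n → ℤ) →ₐ[R] AddMonoidAlgebra R (Fin m → ℤ) :=
  AddMonoidAlgebra.lift R (AddMonoidAlgebra R (Fin m → ℤ)) (Fin n → ℤ)
    (laurentMonHom n m h u c)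

/-- A Laurent polynomial in `n` variables is symmetric if it is invariant under all
permutations of the variables. -/
def IsSymmLaurent {R : Type*} [CommRing R] {n : ℕ}
    (p : AddMonoidAlgebra R (Fin n → ℤ)) : Prop :=
  ∀ τ : Equiv.Perm (Fin n), Finsupp.equivMapDomain (Equiv.arrowCongr τ (Equiv.refl ℤ)) p.coeff = p.coeff

section Aux

variable {R : Type*} [CommRing R]

/-- Coefficient-wise characterization of symmetry. -/
lemma isSymmLaurent_iff {k : ℕ} (q : AddMonoidAlgebra R (Fin k → ℤ)) :
    IsSymmLaurent q ↔
      ∀ (τ : Equiv.Perm (Fin k)) (x : Fin k → ℤ), q.coeff (fun i => x (τ i)) = q.coeff x := by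
  have harr : ∀ (τ : Equiv.Perm (Fin k)) (x : Fin k → ℤ),
      (Equiv.arrowCongr τ (Equiv.refl ℤ)).symm x = fun i => x (τ i) := by
    intro τ x; funext i; rfl
  constructor
  · intro H τ x
    conv_rhs => rw [← H τ]
    rw [Finsupp.equivMapDomain_apply, harr]
  · intro H τ
    ext x
    rw [Finsupp.equivMapDomain_apply, harr]
    exact H τ x


lemma ama_add_apply {k : ℕ} (f g : AddMonoidAlgebra R (Fin k → ℤ)) (x : Fin k → ℤ) :
    (f + g).coeff x = f.coeff x + g.coeff x := Finsupp.add_apply f.coeff g.coeff x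

lemma ama_sub_apply {k : ℕ} (f g : AddMonoidAlgebra R (Fin k → ℤ)) (x : Fin k → ℤ) :
    (f - g).coeff x = f.coeff x - g.coeff x := Finsupp.sub_apply f.coeff g.coeff x

lemma ama_smul_apply {k : ℕ} (r : R) (f : AddMonoidAlgebra R (Fin k → ℤ)) (x : Fin k → ℤ) :
    (r • f).coeff x = r * f.coeff x := by
      rw [AddMonoidAlgebra.coeff_smul, Finsupp.smul_apply, smul_eq_mul]

/-- Symmetric Laurent polynomials form a submodule. -/
def symmSubmodule (R : Type*) [CommRing R] (k : ℕ) :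
    Submodule R (AddMonoidAlgebra R (Fin k → ℤ)) where
  carrier := {p | IsSymmLaurent p}
  zero_mem' := (isSymmLaurent_iff _).2 (by intro τ x; rfl)
  add_mem' := by
    intro a b ha hb
    rw [Set.mem_setOf_eq, isSymmLaurent_iff] at *
    intro τ x
    rw [ama_add_apply, ama_add_apply, ha τ x, hb τ x]
  smul_mem' := by
    intro r a ha
    rw [Set.mem_setOf_eq, isSymmLaurent_iff] at *
    intro τ x
    rw [ama_smul_apply, ama_smul_apply, ha τ x]

lemma mem_symmSubmodule {k : ℕ} {p : AddMonoidAlgebra R (Fin k → ℤ)} :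
    p ∈ symmSubmodule R k ↔ IsSymmLaurent p := Iff.rfl

/-- Extension of a permutation of `Fin m` to `Fin n` by the identity. -/
def extPerm {n m : ℕ} (h : m ≤ n) (τ : Equiv.Perm (Fin m)) : Equiv.Perm (Fin n) where
  toFun j := if hj : (j : ℕ) < m then Fin.castLE h (τ ⟨j, hj⟩) else j
  invFun j := if hj : (j : ℕ) < m then Fin.castLE h (τ.symm ⟨j, hj⟩) else j
  left_inv j := by
    dsimp only
    by_cases hj : (j : ℕ) < m
    · rw [dif_pos hj]
      have h2 : ((Fin.castLE h (τ ⟨j, hj⟩) : Fin n) : ℕ) < m := (τ ⟨j, hj⟩).isLt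
      rw [dif_pos h2]
      have h3 : (⟨((Fin.castLE h (τ ⟨j, hj⟩) : Fin n) : ℕ), h2⟩ : Fin m) = τ ⟨j, hj⟩ :=
        Fin.ext rfl
      rw [h3, Equiv.symm_apply_apply]
      exact Fin.ext rfl
    · rw [dif_neg hj, dif_neg hj]
  right_inv j := by
    dsimp only
    by_cases hj : (j : ℕ) < m
    · rw [dif_pos hj]
      have h2 : ((Fin.castLE h (τ.symm ⟨j, hj⟩) : Fin n) : ℕ) < m := (τ.symm ⟨j, hj⟩).isLt
      rw [dif_pos h2]
      have h3 : (⟨((Fin.castLE h (τ.symm ⟨j, hj⟩) : Fin n) : ℕ), h2⟩ : Fin m) = τ.symm ⟨j, hj⟩ :=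
        Fin.ext rfl
      rw [h3, Equiv.apply_symm_apply]
      exact Fin.ext rfl
    · rw [dif_neg hj, dif_neg hj]

lemma extPerm_castLE {n m : ℕ} (h : m ≤ n) (τ : Equiv.Perm (Fin m)) (i : Fin m) :
    extPerm h τ (Fin.castLE h i) = Fin.castLE h (τ i) := by
  show (if hj : ((Fin.castLE h i : Fin n) : ℕ) < m then Fin.castLE h (τ ⟨_, hj⟩) else _) = _
  rw [dif_pos (show ((Fin.castLE h i : Fin n) : ℕ) < m from i.isLt)]
  exact congrArg (fun z => Fin.castLE h (τ z)) (Fin.ext rfl)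

lemma extPerm_of_le {n m : ℕ} (h : m ≤ n) (τ : Equiv.Perm (Fin m)) {j : Fin n}
    (hj : m ≤ (j : ℕ)) : extPerm h τ j = j := by
  show (if hj : ((j : Fin n) : ℕ) < m then Fin.castLE h (τ ⟨_, hj⟩) else j) = j
  rw [dif_neg (not_lt.2 hj)]

lemma extPerm_symm {n m : ℕ} (h : m ≤ n) (τ : Equiv.Perm (Fin m)) :
    (extPerm h τ).symm = extPerm h τ.symm :=
  Equiv.ext fun _ => rfl

/-- The scalar picked up by the monomial `X^v` under the substitution. -/
noncomputable def chiv {n m : ℕ} (h : m ≤ n) (u : Rˣ) (c : Fin n → Rˣ)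
    (v : Fin n → ℤ) : R :=
  ((laurentCharHom n m h u c (Multiplicative.ofAdd v) : Rˣ) : R)

lemma chiv_def {n m : ℕ} (h : m ≤ n) (u : Rˣ) (c : Fin n → Rˣ) (v : Fin n → ℤ) :
    chiv h u c v = ((u ^ (∑ i : Fin m, v (Fin.castLE h i)) *
      ∏ j : Fin n, (if m ≤ (j : ℕ) then c j ^ (v j) else 1) : Rˣ) : R) := rfl

lemma laurentSubst_single {n m : ℕ} (h : m ≤ n) (u : Rˣ) (c : Fin n → Rˣ)
    (v : Fin n → ℤ) (r : R) :
    laurentSubst n m h u c (AddMonoidAlgebra.single v r) =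
      AddMonoidAlgebra.single (fun i => -v (Fin.castLE h i)) (r * chiv h u c v) := by
  show AddMonoidAlgebra.lift R _ (Fin n → ℤ) _ (AddMonoidAlgebra.single v r) = _
  rw [AddMonoidAlgebra.lift_single]
  show r • (AddMonoidAlgebra.single (laurentExpHom n m h v)
    ((laurentCharHom n m h u c (Multiplicative.ofAdd v) : Rˣ) : R)) = _
  rw [AddMonoidAlgebra.smul_single, smul_eq_mul]
  rfl

/-- The substitution commutes with permutations (the `m`-variable side permutation
corresponding to the extension on the `n`-variable side). -/
lemma laurentSubst_comm {n m : ℕ} (h : m ≤ n) (u : Rˣ) (c : Fin n → Rˣ)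
    (τ : Equiv.Perm (Fin m)) (p : AddMonoidAlgebra R (Fin n → ℤ)) :
    Finsupp.equivMapDomain (Equiv.arrowCongr τ (Equiv.refl ℤ)) (laurentSubst n m h u c p).coeff =
      (laurentSubst n m h u c (AddMonoidAlgebra.ofCoeff
        (Finsupp.equivMapDomain (Equiv.arrowCongr (extPerm h τ) (Equiv.refl ℤ)) p.coeff))).coeff := by
  have hadd : ∀ (k : ℕ) (e : (Fin k → ℤ) ≃ (Fin k → ℤ))
      (f g : (Fin k → ℤ) →₀ R),
      Finsupp.equivMapDomain e (f + g) =
        Finsupp.equivMapDomain e f + Finsupp.equivMapDomain e g := by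
    intro k e f g; ext x
    rw [Finsupp.equivMapDomain_apply, Finsupp.add_apply, Finsupp.add_apply,
      Finsupp.equivMapDomain_apply, Finsupp.equivMapDomain_apply]
  induction p using AddMonoidAlgebra.induction_linear with
  | zero => simp
  | add f g hf hg =>
    simp only [map_add, AddMonoidAlgebra.coeff_add, hadd, AddMonoidAlgebra.ofCoeff_add, hf, hg]
  | single v r =>
    rw [laurentSubst_single, AddMonoidAlgebra.coeff_single, Finsupp.equivMapDomain_single,
      AddMonoidAlgebra.coeff_single, Finsupp.equivMapDomain_single,
      AddMonoidAlgebra.ofCoeff_single, laurentSubst_single, AddMonoidAlgebra.coeff_single]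
    have harr1 : (Equiv.arrowCongr τ (Equiv.refl ℤ)) (fun i => -v (Fin.castLE h i)) =
        fun i => -v (Fin.castLE h (τ.symm i)) := by
      funext i; rfl
    have harr2 : (Equiv.arrowCongr (extPerm h τ) (Equiv.refl ℤ)) v =
        fun j => v ((extPerm h τ).symm j) := by
      funext j; rfl
    rw [harr1, harr2]
    have hexp : (fun i => -(fun j => v ((extPerm h τ).symm j)) (Fin.castLE h i)) =
        fun i => -v (Fin.castLE h (τ.symm i)) := by
      funext i
      dsimp only
      rw [extPerm_symm, extPerm_castLE]
    have hchi : chiv h u c (fun j => v ((extPerm h τ).symm j)) = chiv h u c v := by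
      have goal1 : (∑ i : Fin m, (fun j => v ((extPerm h τ).symm j)) (Fin.castLE h i)) =
          ∑ i : Fin m, v (Fin.castLE h i) := by
        have e1 : ∀ i ∈ (Finset.univ : Finset (Fin m)),
            (fun j => v ((extPerm h τ).symm j)) (Fin.castLE h i) =
              v (Fin.castLE h (τ.symm i)) := by
          intro i _
          dsimp only
          rw [extPerm_symm, extPerm_castLE]
        rw [Finset.sum_congr rfl e1]
        exact Equiv.sum_comp τ.symm fun i => v (Fin.castLE h i)
      have goal2 : (∏ j : Fin n,
          (if m ≤ (j : ℕ) then c j ^ ((fun j' => v ((extPerm h τ).symm j')) j) else 1)) =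
          ∏ j : Fin n, (if m ≤ (j : ℕ) then c j ^ (v j) else 1) := by
        apply Finset.prod_congr rfl
        intro j _
        dsimp only
        by_cases hj : m ≤ (j : ℕ)
        · rw [if_pos hj, if_pos hj, extPerm_symm, extPerm_of_le h τ.symm hj]
        · rw [if_neg hj, if_neg hj]
      rw [chiv_def, chiv_def, goal1, goal2]
    rw [hexp, hchi]

/-- Part 1: the substitution sends symmetric elements to symmetric elements. -/
lemma laurentSubst_symm {n m : ℕ} (h : m ≤ n) (u : Rˣ) (c : Fin n → Rˣ)
    (p : AddMonoidAlgebra R (Fin n → ℤ)) (hp : IsSymmLaurent p) :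
    IsSymmLaurent (laurentSubst n m h u c p) := by
  intro τ
  rw [laurentSubst_comm, hp (extPerm h τ), AddMonoidAlgebra.ofCoeff_coeff]

/-- Number of nonzero entries of an exponent vector. -/
def nzc {k : ℕ} (v : Fin k → ℤ) : ℕ := Fintype.card {i // v i ≠ 0}

lemma nzc_comp {k : ℕ} (v : Fin k → ℤ) (σ : Equiv.Perm (Fin k)) :
    nzc (fun i => v (σ i)) = nzc v :=
  Fintype.card_congr (σ.subtypeEquiv fun _ => Iff.rfl)

lemma nzc_neg {k : ℕ} (v : Fin k → ℤ) : nzc (fun i => -v i) = nzc v :=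
  Fintype.card_congr (Equiv.subtypeEquivRight fun i => by simp)

lemma nzc_of_tail_eq_zero {n m : ℕ} (h : m ≤ n) (v : Fin n → ℤ)
    (hv : ∀ j : Fin n, m ≤ (j : ℕ) → v j = 0) :
    nzc v = nzc (fun i : Fin m => v (Fin.castLE h i)) := by
  apply Fintype.card_congr
  have hlt : ∀ x : {j : Fin n // v j ≠ 0}, ((x.1 : Fin n) : ℕ) < m :=
    fun x => lt_of_not_ge fun hge => x.2 (hv x.1 hge)
  exact {
    toFun := fun x => ⟨⟨((x.1 : Fin n) : ℕ), hlt x⟩, by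
      show v (Fin.castLE h (⟨((x.1 : Fin n) : ℕ), hlt x⟩ : Fin m)) ≠ 0
      have he : Fin.castLE h (⟨((x.1 : Fin n) : ℕ), hlt x⟩ : Fin m) = x.1 := Fin.ext rfl
      rw [he]
      exact x.2⟩
    invFun := fun y => ⟨Fin.castLE h y.1, y.2⟩
    left_inv := fun x => Subtype.ext (Fin.ext rfl)
    right_inv := fun y => Subtype.ext (Fin.ext rfl) }

lemma nzc_head_lt {n m : ℕ} (h : m ≤ n) (v : Fin n → ℤ) {j0 : Fin n}
    (hj0 : m ≤ (j0 : ℕ)) (hne : v j0 ≠ 0) :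
    nzc (fun i : Fin m => v (Fin.castLE h i)) < nzc v := by
  refine Fintype.card_lt_of_injective_of_notMem
    (fun x : {i : Fin m // v (Fin.castLE h i) ≠ 0} => (⟨Fin.castLE h x.1, x.2⟩ : {j // v j ≠ 0}))
    ?_ (b := (⟨j0, hne⟩ : {j // v j ≠ 0})) ?_
  · intro a b hab
    apply Subtype.ext
    apply Fin.ext
    exact congrArg (fun z : {j // v j ≠ 0} => ((z.1 : Fin n) : ℕ)) hab
  · rintro ⟨x, hx⟩
    have h1 : ((Fin.castLE h x.1 : Fin n) : ℕ) = (j0 : ℕ) :=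
      congrArg (fun z : {j // v j ≠ 0} => ((z.1 : Fin n) : ℕ)) hx
    have h2 : ((x.1 : Fin m) : ℕ) < m := x.1.isLt
    have h3 : ((Fin.castLE h x.1 : Fin n) : ℕ) = ((x.1 : Fin m) : ℕ) := rfl
    omega

/-- Extension of an exponent vector by zeros. -/
def extz {n m : ℕ} (h : m ≤ n) (x : Fin m → ℤ) : Fin n → ℤ :=
  fun j => if hj : (j : ℕ) < m then x ⟨j, hj⟩ else 0

lemma extz_castLE {n m : ℕ} (h : m ≤ n) (x : Fin m → ℤ) (i : Fin m) :
    extz h x (Fin.castLE h i) = x i := dif_pos i.isLt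

lemma extz_of_le {n m : ℕ} (h : m ≤ n) (x : Fin m → ℤ) {j : Fin n} (hj : m ≤ (j : ℕ)) :
    extz h x j = 0 := dif_neg (not_lt.2 hj)

/-- If two tail-zero vectors on `Fin n` differ by a permutation of `Fin n`, then their
heads differ by a permutation of `Fin m`. -/
lemma exists_perm_head {n m : ℕ} (h : m ≤ n) (v w0 : Fin n → ℤ) (σ : Equiv.Perm (Fin n))
    (hvw : ∀ j, v j = w0 (σ j))
    (hv : ∀ j : Fin n, m ≤ (j : ℕ) → v j = 0) (hw : ∀ j : Fin n, m ≤ (j : ℕ) → w0 j = 0) :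
    ∃ τ : Equiv.Perm (Fin m), ∀ i : Fin m, v (Fin.castLE h i) = w0 (Fin.castLE h (τ i)) := by
  classical
  set P : Fin m → Prop := fun i => v (Fin.castLE h i) ≠ 0 with hP
  set Q : Fin m → Prop := fun i => w0 (Fin.castLE h i) ≠ 0 with hQ
  have hlt1 : ∀ i : Fin m, P i → ((σ (Fin.castLE h i) : Fin n) : ℕ) < m := by
    intro i hi
    by_contra hge
    push_neg at hge
    exact hi ((hvw _).trans (hw _ hge))
  have hlt2 : ∀ i : Fin m, Q i → ((σ.symm (Fin.castLE h i) : Fin n) : ℕ) < m := by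
    intro i hi
    by_contra hge
    push_neg at hge
    apply hi
    rw [← σ.apply_symm_apply (Fin.castLE h i), ← hvw]
    exact hv _ hge
  let e₁ : {i // P i} ≃ {i // Q i} :=
    { toFun := fun x => ⟨⟨((σ (Fin.castLE h x.1) : Fin n) : ℕ), hlt1 x.1 x.2⟩, by
        show w0 (Fin.castLE h _) ≠ 0
        have he : Fin.castLE h (⟨((σ (Fin.castLE h x.1) : Fin n) : ℕ), hlt1 x.1 x.2⟩ : Fin m)
            = σ (Fin.castLE h x.1) := Fin.ext rfl
        rw [he, ← hvw]
        exact x.2⟩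
      invFun := fun y => ⟨⟨((σ.symm (Fin.castLE h y.1) : Fin n) : ℕ), hlt2 y.1 y.2⟩, by
        show v (Fin.castLE h _) ≠ 0
        have he : Fin.castLE h (⟨((σ.symm (Fin.castLE h y.1) : Fin n) : ℕ), hlt2 y.1 y.2⟩ : Fin m)
            = σ.symm (Fin.castLE h y.1) := Fin.ext rfl
        rw [he, hvw, σ.apply_symm_apply]
        exact y.2⟩
      left_inv := by
        intro x
        apply Subtype.ext
        apply Fin.ext
        show ((σ.symm (Fin.castLE h _) : Fin n) : ℕ) = _
        have he : Fin.castLE h (⟨((σ (Fin.castLE h x.1) : Fin n) : ℕ), hlt1 x.1 x.2⟩ : Fin m)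
            = σ (Fin.castLE h x.1) := Fin.ext rfl
        rw [he, σ.symm_apply_apply]
        rfl
      right_inv := by
        intro y
        apply Subtype.ext
        apply Fin.ext
        show ((σ (Fin.castLE h _) : Fin n) : ℕ) = _
        have he : Fin.castLE h (⟨((σ.symm (Fin.castLE h y.1) : Fin n) : ℕ), hlt2 y.1 y.2⟩ : Fin m)
            = σ.symm (Fin.castLE h y.1) := Fin.ext rfl
        rw [he, σ.apply_symm_apply]
        rfl }
  have hcard : Fintype.card {i // ¬ P i} = Fintype.card {i // ¬ Q i} := by
    have hPQ : Fintype.card {i // P i} = Fintype.card {i // Q i} := Fintype.card_congr e₁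
    have h1 : Fintype.card {i // P i} + Fintype.card {i // ¬ P i} = m := by
      rw [← Fintype.card_sum, Fintype.card_congr (Equiv.sumCompl P), Fintype.card_fin]
    have h2 : Fintype.card {i // Q i} + Fintype.card {i // ¬ Q i} = m := by
      rw [← Fintype.card_sum, Fintype.card_congr (Equiv.sumCompl Q), Fintype.card_fin]
    omega
  let e₂ : {i // ¬ P i} ≃ {i // ¬ Q i} := Fintype.equivOfCardEq hcard
  refine ⟨(Equiv.sumCompl P).symm.trans ((e₁.sumCongr e₂).trans (Equiv.sumCompl Q)), ?_⟩
  intro i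
  by_cases hi : P i
  · have h1 : ((Equiv.sumCompl P).symm i) = Sum.inl ⟨i, hi⟩ :=
      Equiv.sumCompl_symm_apply_of_pos hi
    simp only [Equiv.trans_apply, h1, Equiv.sumCongr_apply, Sum.map_inl,
      Equiv.sumCompl_apply_inl]
    have h2 : Fin.castLE h ((e₁ ⟨i, hi⟩ : {i // Q i}) : Fin m) = σ (Fin.castLE h i) :=
      Fin.ext rfl
    rw [h2]
    exact hvw _
  · have h1 : ((Equiv.sumCompl P).symm i) = Sum.inr ⟨i, hi⟩ :=
      Equiv.sumCompl_symm_apply_of_neg hi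
    simp only [Equiv.trans_apply, h1, Equiv.sumCongr_apply, Sum.map_inr,
      Equiv.sumCompl_apply_inr]
    have h2 : ¬ Q ((e₂ ⟨i, hi⟩ : {i // ¬ Q i}) : Fin m) := (e₂ ⟨i, hi⟩).2
    rw [not_not.1 (fun hh => hi hh), not_not.1 h2]

/-- The orbit of an exponent vector under the symmetric group, as a finset. -/
def orb {k : ℕ} (l : Fin k → ℤ) : Finset (Fin k → ℤ) :=
  Finset.image (fun σ : Equiv.Perm (Fin k) => fun i => l (σ i)) Finset.univ

lemma mem_orb {k : ℕ} {l w : Fin k → ℤ} :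
    w ∈ orb l ↔ ∃ σ : Equiv.Perm (Fin k), w = fun i => l (σ i) := by
  simp [orb, eq_comm]

lemma self_mem_orb {k : ℕ} (l : Fin k → ℤ) : l ∈ orb l :=
  mem_orb.2 ⟨1, rfl⟩

lemma comp_mem_orb_iff {k : ℕ} (l x : Fin k → ℤ) (τ : Equiv.Perm (Fin k)) :
    (fun i => x (τ i)) ∈ orb l ↔ x ∈ orb l := by
  constructor
  · intro hmem
    obtain ⟨σ, hσ⟩ := mem_orb.1 hmem
    refine mem_orb.2 ⟨σ * τ.symm, funext fun i => ?_⟩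
    have h1 := congrFun hσ (τ.symm i)
    simpa using h1
  · intro hmem
    obtain ⟨σ, hσ⟩ := mem_orb.1 hmem
    exact mem_orb.2 ⟨σ * τ, funext fun i => congrFun hσ (τ i)⟩

/-- The orbit sum (monomial symmetric Laurent polynomial). -/
noncomputable def osum (R : Type*) [CommRing R] {k : ℕ} (l : Fin k → ℤ) :
    AddMonoidAlgebra R (Fin k → ℤ) :=
  ∑ w ∈ orb l, AddMonoidAlgebra.single w 1

lemma osum_apply {k : ℕ} (l x : Fin k → ℤ) :
    (osum R l).coeff x = if x ∈ orb l then 1 else 0 := by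
  show (∑ w ∈ orb l, AddMonoidAlgebra.single w (1 : R)).coeff x = _
  rw [AddMonoidAlgebra.coeff_sum, Finsupp.finset_sum_apply]
  simp only [AddMonoidAlgebra.coeff_single]
  rw [
    Finset.sum_congr rfl (fun w _ => Finsupp.single_apply)]
  exact Finset.sum_ite_eq' (orb l) x (fun _ => 1)

lemma osum_symm {k : ℕ} (l : Fin k → ℤ) : IsSymmLaurent (osum R l) :=
  (isSymmLaurent_iff _).2 fun τ x => by
    rw [osum_apply, osum_apply]
    exact if_congr (comp_mem_orb_iff l x τ) rfl rfl

/-- Decomposition lemma: a symmetric element lies in any submodule containing all the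
orbit sums attached to its support. -/
lemma mem_of_osum_mem {k : ℕ} (T' : Submodule R (AddMonoidAlgebra R (Fin k → ℤ))) :
    ∀ (N : ℕ) (q : AddMonoidAlgebra R (Fin k → ℤ)), q.coeff.support.card ≤ N →
      IsSymmLaurent q → (∀ l ∈ q.coeff.support, osum R l ∈ T') → q ∈ T' := by
  intro N
  induction N with
  | zero =>
    intro q hq _ _
    have : q = 0 := by
      apply AddMonoidAlgebra.coeff_injective
      rw [AddMonoidAlgebra.coeff_zero, ← Finsupp.support_eq_empty]
      exact Finset.card_eq_zero.1 (Nat.le_zero.1 hq)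
    rw [this]; exact T'.zero_mem
  | succ N ih =>
    intro q hq hsym hos
    rcases eq_or_ne q 0 with h0 | h0
    · rw [h0]; exact T'.zero_mem
    obtain ⟨l, hl⟩ := (Finsupp.support_nonempty_iff (f := q.coeff)).2
        (fun h => h0 (AddMonoidAlgebra.coeff_injective (by rw [h, AddMonoidAlgebra.coeff_zero])))
    have hsym' := (isSymmLaurent_iff q).1 hsym
    set q' := q - q.coeff l • osum R l with hq'
    have hq'apply : ∀ x, q'.coeff x = q.coeff x - q.coeff l * (if x ∈ orb l then 1 else 0) := by
      intro x
      rw [hq', AddMonoidAlgebra.coeff_sub, Finsupp.sub_apply, AddMonoidAlgebra.coeff_smul,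
        Finsupp.smul_apply, osum_apply, smul_eq_mul]
    have horb : ∀ x ∈ orb l, q.coeff x = q.coeff l := by
      intro x hx
      obtain ⟨σ, rfl⟩ := mem_orb.1 hx
      exact hsym' σ l
    have hsup : q'.coeff.support ⊆ q.coeff.support.erase l := by
      intro x hx
      have hx' := Finsupp.mem_support_iff.1 hx
      rw [hq'apply] at hx'
      by_cases hxo : x ∈ orb l
      · exact absurd (by rw [horb x hxo, if_pos hxo, mul_one, sub_self]) hx'
      · rw [if_neg hxo, mul_zero, sub_zero] at hx'
        refine Finset.mem_erase.2 ⟨?_, Finsupp.mem_support_iff.2 hx'⟩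
        rintro rfl
        exact hxo (self_mem_orb x)
    have hcard : q'.coeff.support.card ≤ N := by
      have h1 := Finset.card_le_card hsup
      have h2 := Finset.card_erase_of_mem hl
      omega
    have hsm : IsSymmLaurent q' :=
      mem_symmSubmodule.1 (Submodule.sub_mem _ (mem_symmSubmodule.2 hsym)
        (Submodule.smul_mem _ _ (mem_symmSubmodule.2 (osum_symm l))))
    have hq'T : q' ∈ T' := ih q' hcard hsm
      (fun l' hl' => hos l' (Finset.mem_of_mem_erase (hsup hl')))
    have hdecomp : q = q' + q.coeff l • osum R l := by rw [hq', sub_add_cancel]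
    rw [hdecomp]
    exact T'.add_mem hq'T (T'.smul_mem _ (hos l hl))

lemma chiv_extz {n m : ℕ} (hmn : m ≤ n) (u : Rˣ) (c : Fin n → Rˣ) (y : Fin m → ℤ) :
    chiv hmn u c (extz hmn y) = ((u ^ (∑ i, y i) : Rˣ) : R) := by
  rw [chiv_def]
  have h1 : (∑ i : Fin m, extz hmn y (Fin.castLE hmn i)) = ∑ i, y i :=
    Finset.sum_congr rfl fun i _ => extz_castLE hmn y i
  have h2 : (∏ j : Fin n, (if m ≤ (j : ℕ) then c j ^ (extz hmn y j) else 1)) = 1 := by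
    apply Finset.prod_eq_one
    intro j _
    by_cases hj : m ≤ (j : ℕ)
    · rw [if_pos hj, extz_of_le hmn y hj, zpow_zero]
    · rw [if_neg hj]
  rw [h1, h2, mul_one]

/-- The key induction: every orbit sum is in the image of the symmetric elements. -/
lemma osum_mem_image (n m : ℕ) (hmn : m ≤ n) (u : Rˣ) (c : Fin n → Rˣ) :
    ∀ (N : ℕ) (l : Fin m → ℤ), nzc l < N →
      osum R l ∈ (symmSubmodule R n).map (laurentSubst n m hmn u c).toLinearMap := by
  intro N
  induction N with
  | zero => intro l hl; exact absurd hl (Nat.not_lt_zero _)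
  | succ N ih =>
    intro l hl
    set T := (symmSubmodule R n).map (laurentSubst n m hmn u c).toLinearMap with hT
    set μ : Fin n → ℤ := extz hmn (fun i => -l i) with hμ
    have hμtail : ∀ j : Fin n, m ≤ (j : ℕ) → μ j = 0 := fun j hj => extz_of_le hmn _ hj
    have hμhead : ∀ i : Fin m, μ (Fin.castLE hmn i) = -l i := fun i => extz_castLE hmn _ i
    have hnzcμ : nzc μ = nzc l := by
      rw [nzc_of_tail_eq_zero hmn μ hμtail]
      have h2 : (fun i : Fin m => μ (Fin.castLE hmn i)) = fun i => -l i := funext hμhead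
      rw [h2, nzc_neg]
    set r := laurentSubst n m hmn u c (osum R μ) with hr
    have hrT : r ∈ T := Submodule.mem_map.2 ⟨osum R μ, mem_symmSubmodule.2 (osum_symm μ), rfl⟩
    have hrsym : IsSymmLaurent r := laurentSubst_symm hmn u c _ (osum_symm μ)
    set S : ℤ := ∑ i, l i with hS
    have hrapply : ∀ x : Fin m → ℤ, r.coeff x = ∑ v ∈ orb μ,
        (if (fun i => -v (Fin.castLE hmn i)) = x then chiv hmn u c v else 0) := by
      intro x
      rw [hr]
      show (laurentSubst n m hmn u c (∑ w ∈ orb μ, AddMonoidAlgebra.single w 1)).coeff x = _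
      rw [map_sum, AddMonoidAlgebra.coeff_sum, Finsupp.finset_sum_apply]
      apply Finset.sum_congr rfl
      intro v _
      rw [laurentSubst_single, one_mul, AddMonoidAlgebra.coeff_single, Finsupp.single_apply]
    have huniq : ∀ x : Fin m → ℤ, nzc l ≤ nzc x → ∀ v ∈ orb μ,
        (fun i => -v (Fin.castLE hmn i)) = x →
        v = extz hmn (fun i => -x i) ∧ x ∈ orb l := by
      intro x hx v hv hfv
      obtain ⟨σ, rfl⟩ := mem_orb.1 hv
      have hhead : ∀ i : Fin m, μ (σ (Fin.castLE hmn i)) = -x i := by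
        intro i
        have h1 := congrFun hfv i
        dsimp only at h1
        omega
      have htail : ∀ j : Fin n, m ≤ (j : ℕ) → μ (σ j) = 0 := by
        by_contra hcon
        push_neg at hcon
        obtain ⟨j0, hj0, hne⟩ := hcon
        have h1 : nzc (fun i : Fin m => (fun j => μ (σ j)) (Fin.castLE hmn i)) <
            nzc (fun j => μ (σ j)) := nzc_head_lt hmn (fun j => μ (σ j)) hj0 hne
        have h2 : (fun i : Fin m => (fun j => μ (σ j)) (Fin.castLE hmn i)) =
            fun i => -x i := funext hhead
        rw [h2, nzc_neg, nzc_comp] at h1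
        omega
      constructor
      · funext j
        by_cases hj : (j : ℕ) < m
        · have hj' : j = Fin.castLE hmn (⟨(j : ℕ), hj⟩ : Fin m) := Fin.ext rfl
          rw [hj', extz_castLE]
          have := hhead ⟨(j : ℕ), hj⟩
          omega
        · rw [extz_of_le hmn _ (le_of_not_gt hj)]
          exact htail j (le_of_not_gt hj)
      · obtain ⟨τ, hτ⟩ := exists_perm_head hmn (fun j => μ (σ j)) μ σ (fun j => rfl)
          htail hμtail
        refine mem_orb.2 ⟨τ, funext fun i => ?_⟩
        have h1 := hτ i
        rw [hhead i, hμhead (τ i)] at h1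
        omega
    have key : ∀ x : Fin m → ℤ, nzc l ≤ nzc x →
        r.coeff x = (if x ∈ orb l then ((u ^ (-S) : Rˣ) : R) else 0) := by
      intro x hx
      by_cases hxo : x ∈ orb l
      · rw [if_pos hxo, hrapply x]
        have hmem : extz hmn (fun i => -x i) ∈ orb μ := by
          obtain ⟨τ, hτ⟩ := mem_orb.1 hxo
          refine mem_orb.2 ⟨extPerm hmn τ, funext fun j => ?_⟩
          by_cases hj : (j : ℕ) < m
          · have hj' : j = Fin.castLE hmn (⟨(j : ℕ), hj⟩ : Fin m) := Fin.ext rfl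
            rw [hj', extz_castLE, extPerm_castLE, hμhead]
            rw [congrFun hτ (⟨(j : ℕ), hj⟩ : Fin m)]
          · rw [extz_of_le hmn _ (le_of_not_gt hj),
              extPerm_of_le hmn τ (le_of_not_gt hj), hμtail j (le_of_not_gt hj)]
        rw [Finset.sum_eq_single (extz hmn (fun i => -x i))]
        · rw [if_pos (funext fun i => by rw [extz_castLE]; ring)]
          rw [chiv_extz]
          congr 2
          have hsx : ∑ i, x i = S := by
            obtain ⟨τ, rfl⟩ := mem_orb.1 hxo
            exact Equiv.sum_comp τ l
          rw [← hsx, ← Finset.sum_neg_distrib]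
        · intro v hv hne
          rw [if_neg]
          intro hfv
          exact hne (huniq x hx v hv hfv).1
        · intro habs
          exact absurd hmem habs
      · rw [if_neg hxo, hrapply x]
        apply Finset.sum_eq_zero
        intro v hv
        rw [if_neg]
        intro hfv
        exact hxo (huniq x hx v hv hfv).2
    set rem := r - ((u ^ (-S) : Rˣ) : R) • osum R l with hrem
    have hrem_sup : ∀ x ∈ rem.coeff.support, nzc x < nzc l := by
      intro x hxs
      by_contra hge
      push_neg at hge
      apply Finsupp.mem_support_iff.1 hxs
      rw [hrem, AddMonoidAlgebra.coeff_sub, Finsupp.sub_apply, AddMonoidAlgebra.coeff_smul,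
          Finsupp.smul_apply, osum_apply, key x hge, smul_eq_mul]
      by_cases hxo : x ∈ orb l
      · rw [if_pos hxo, if_pos hxo, mul_one, sub_self]
      · rw [if_neg hxo, if_neg hxo, mul_zero, sub_zero]
    have hrem_sym : IsSymmLaurent rem :=
      mem_symmSubmodule.1 (Submodule.sub_mem _ (mem_symmSubmodule.2 hrsym)
        (Submodule.smul_mem _ _ (mem_symmSubmodule.2 (osum_symm l))))
    have hremT : rem ∈ T :=
      mem_of_osum_mem T rem.coeff.support.card rem le_rfl hrem_sym
        (fun l' hl' => ih l' (by have := hrem_sup l' hl'; omega))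
    have hfinal : osum R l = ((u ^ S : Rˣ) : R) • (r - rem) := by
      rw [hrem, sub_sub_cancel, smul_smul, ← Units.val_mul, ← zpow_add, add_neg_cancel,
        zpow_zero, Units.val_one, one_smul]
    rw [hfinal]
    exact T.smul_mem _ (T.sub_mem hrT hremT)

end Aux

/-- Let `R` be a commutative ring, `m ≤ n` positive integers, `u` a unit
of `R` and `c_i` units of `R` (for `m < i ≤ n`). Then the substitution
`X_i ↦ u·X_i⁻¹ (1 ≤ i ≤ m)`, `X_i ↦ c_i (m < i ≤ n)` — which is an `R`-algebra
homomorphism between Laurent polynomial rings — maps every symmetric Laurent polynomial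
in `n` variables to a symmetric Laurent polynomial in `m` variables, and the resulting
`R`-algebra homomorphism `R[X^{±1}]^{S_n} → R[X^{±1}]^{S_m}` is surjective. -/
theorem stmt7 {R : Type*} [CommRing R] (n m : ℕ) (hm : 0 < m) (hmn : m ≤ n)
    (u : Rˣ) (c : Fin n → Rˣ) :
    (∀ p : AddMonoidAlgebra R (Fin n → ℤ), IsSymmLaurent p →
      IsSymmLaurent (laurentSubst n m hmn u c p)) ∧
    (∀ q : AddMonoidAlgebra R (Fin m → ℤ), IsSymmLaurent q →
      ∃ p : AddMonoidAlgebra R (Fin n → ℤ), IsSymmLaurent p ∧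
        laurentSubst n m hmn u c p = q) := by
  classical
  constructor
  · exact fun p hp => laurentSubst_symm hmn u c p hp
  · intro q hq
    have hqT : q ∈ (symmSubmodule R n).map (laurentSubst n m hmn u c).toLinearMap :=
      mem_of_osum_mem _ q.coeff.support.card q le_rfl hq
        (fun l _ => osum_mem_image n m hmn u c (nzc l + 1) l (Nat.lt_succ_self _))
    obtain ⟨p, hp, hpq⟩ := Submodule.mem_map.1 hqT
    exact ⟨p, mem_symmSubmodule.1 hp, hpq⟩
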